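/- Let a, b, c be positive reals with c ≤ min(a, b) (c represents |V_A ∩ V_B| ≤ min(|V_A|,|V_B|)), and δ ≥ 1/2. If a > c · √a/√b (the NarSim correct-decision criterion S(v_A,v_A) > S(v_A,v_B) after multiplying through by √a), then a > c · (min(a/b, b/a))^δ (the BlbSim correct-decision criterion). -/
import Mathlib


theorem stmt_4 (a b c δ : ℝ) (ha : 0 < a) (hb : 0 < b) (hc : 0 < c)
    (hcmin : c ≤ min a b) (hδ : 1/2 ≤ δ)
    (hNar : a > c * (Real.sqrt a / Real.sqrt b)) :
    a > c * (min (a / b) (b / a)) ^ δ := by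
  have hm : 0 < min (a / b) (b / a) := lt_min (div_pos ha hb) (div_pos hb ha)
  have hm1 : min (a / b) (b / a) ≤ 1 := by
    rcases le_total a b with h | h
    · exact le_trans (min_le_left _ _) ((div_le_one hb).2 h)
    · exact le_trans (min_le_right _ _) ((div_le_one ha).2 h)
  have h1 : min (a / b) (b / a) ^ δ ≤ min (a / b) (b / a) ^ (1/2 : ℝ) :=
    Real.rpow_le_rpow_of_exponent_ge hm hm1 hδ
  have h2 : min (a / b) (b / a) ^ (1/2 : ℝ) ≤ (a / b) ^ (1/2 : ℝ) :=
    Real.rpow_le_rpow hm.le (min_le_left _ _) (by norm_num)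
  have h3 : (a / b) ^ (1/2 : ℝ) = Real.sqrt a / Real.sqrt b := by
    rw [← Real.sqrt_eq_rpow, Real.sqrt_div ha.le]
  calc c * min (a / b) (b / a) ^ δ ≤ c * (Real.sqrt a / Real.sqrt b) := by
        apply mul_le_mul_of_nonneg_left _ hc.le
        rw [← h3]; exact h1.trans h2
    _ < a := hNar
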